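/- Let P_v(n) be the coefficients of the eighth order mock theta function v(q) = Σ_{n≥0} q^{(n+1)^2} (−q;q^2)_n / (q;q^2)_{n+1} = Σ_{n≥0} P_v(n) q^n. Let p ≥ 3 be a prime such that −2 is a quadratic non-residue modulo p. Then for every integer α ≥ 0, every n ≥ 0, and every j with 1 ≤ j ≤ p−1, P_v(2·p^{2α+2}·n + 2·p^{2α+1}·j + (3·p^{2α+2}+1)/4) ≡ 0 (mod 2). -/

import Mathlib

/-- The `n`-th summand of the eighth order mock theta function
`v(q) = Σ_{n≥0} q^((n+1)^2) (−q;q^2)_n / (q;q^2)_{n+1}`. -/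
noncomputable def vTerm (n : ℕ) : PowerSeries ℤ :=
  (PowerSeries.X : PowerSeries ℤ) ^ ((n + 1) ^ 2)
    * (∏ j ∈ Finset.range n, (1 + (PowerSeries.X : PowerSeries ℤ) ^ (2 * j + 1)))
    * Ring.inverse (∏ j ∈ Finset.range (n + 1), (1 - (PowerSeries.X : PowerSeries ℤ) ^ (2 * j + 1)))

/-- `Pv N` is the coefficient of `q^N` in `v(q)`; since the `n`-th summand has order
at least `(n+1)^2 > N` for `n > N`, the partial sum over `n ≤ N` suffices. -/
noncomputable def Pv (N : ℕ) : ℤ :=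
  PowerSeries.coeff N (∑ n ∈ Finset.range (N + 1), vTerm n)

open PowerSeries Finset

section Aux

/-- If `a * b = 1` then `Ring.inverse a = b`. -/
lemma ring_inverse_eq_of_mul_eq_one {R : Type*} [CommMonoidWithZero R] {a b : R}
    (h : a * b = 1) : Ring.inverse a = b := by
  have ha : IsUnit a := IsUnit.of_mul_eq_one b h
  calc Ring.inverse a = Ring.inverse a * (a * b) := by rw [h, mul_one]
  _ = b := by rw [← mul_assoc, Ring.inverse_mul_cancel _ ha, one_mul]

variable {R : Type*} [CommRing R]

lemma constantCoeff_one_sub_X_pow (d : ℕ) (hd : 0 < d) :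
    PowerSeries.constantCoeff (R := R) (1 - X ^ d) = 1 := by
  rw [map_sub, map_one, ← coeff_zero_eq_constantCoeff, coeff_X_pow]
  simp [Nat.pos_iff_ne_zero.mp hd |>.symm, hd.ne']

lemma isUnit_one_sub_X_pow (d : ℕ) (hd : 0 < d) : IsUnit ((1 : R⟦X⟧) - X ^ d) := by
  rw [PowerSeries.isUnit_iff_constantCoeff, constantCoeff_one_sub_X_pow d hd]
  exact isUnit_one

lemma isUnit_prod_one_sub (n : ℕ) :
    IsUnit (∏ j ∈ Finset.range n, ((1 : R⟦X⟧) - X ^ (2 * j + 1))) := by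
  rw [PowerSeries.isUnit_iff_constantCoeff, map_prod]
  rw [Finset.prod_congr rfl (fun j _ => constantCoeff_one_sub_X_pow (R := R) (2 * j + 1) (by omega)),
    Finset.prod_const_one]
  exact isUnit_one

/-- the geometric series for `1/(1 - X^d)` -/
noncomputable def geom (d : ℕ) : R⟦X⟧ := PowerSeries.mk fun k => if d ∣ k then 1 else 0

lemma one_sub_X_pow_mul_geom (d : ℕ) (hd : 0 < d) :
    ((1 : R⟦X⟧) - X ^ d) * geom d = 1 := by
  ext N
  rw [sub_mul, one_mul, map_sub, coeff_X_pow_mul', coeff_one]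
  rcases Nat.eq_zero_or_pos N with hN | hN
  · subst hN
    simp [geom, hd.ne', Nat.not_le.mpr hd]
  · rw [if_neg hN.ne']
    by_cases hdN : d ≤ N
    · rw [if_pos hdN]
      simp only [geom, coeff_mk]
      have : d ∣ N ↔ d ∣ N - d := by
        constructor
        · intro h; exact Nat.dvd_sub h dvd_rfl
        · intro h; have := Nat.dvd_add h (dvd_refl d); rwa [Nat.sub_add_cancel hdN] at this
      by_cases h : d ∣ N
      · rw [if_pos h, if_pos (this.mp h), sub_self]
      · rw [if_neg h, if_neg (fun hh => h (this.mpr hh)), sub_self]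
    · rw [if_neg hdN]
      simp only [geom, coeff_mk, sub_zero]
      rw [if_neg]
      intro h
      exact hdN (Nat.le_of_dvd hN h)

lemma ring_inverse_one_sub_X_pow (d : ℕ) (hd : 0 < d) :
    Ring.inverse ((1 : R⟦X⟧) - X ^ d) = geom d :=
  ring_inverse_eq_of_mul_eq_one (one_sub_X_pow_mul_geom d hd)

end Aux

section Map

/-- reduction of `vTerm n` mod 2 is `X^((n+1)^2) / (1 - X^(2n+1))`. -/
lemma vTerm_map (n : ℕ) :
    PowerSeries.map (Int.castRingHom (ZMod 2)) (vTerm n)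
      = X ^ ((n + 1) ^ 2) * geom (2 * n + 1) := by
  have h2 : ∀ y : (ZMod 2)⟦X⟧, (1 : (ZMod 2)⟦X⟧) + y = 1 - y := by
    intro y
    have hy : y + y = 0 := by
      ext k
      rw [map_add, map_zero]
      exact CharTwo.add_self_eq_zero _
    linear_combination hy
  set f := Int.castRingHom (ZMod 2)
  set B : ℤ⟦X⟧ := ∏ j ∈ Finset.range (n + 1), (1 - (PowerSeries.X : ℤ⟦X⟧) ^ (2 * j + 1))
    with hBdef
  have hBunit : IsUnit B := isUnit_prod_one_sub (n + 1)
  have hmapB : PowerSeries.map f B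
      = ∏ j ∈ Finset.range (n + 1), ((1 : (ZMod 2)⟦X⟧) - X ^ (2 * j + 1)) := by
    rw [hBdef, map_prod]
    refine Finset.prod_congr rfl fun j _ => ?_
    rw [map_sub, map_one, map_pow, PowerSeries.map_X]
  have hmapBunit : IsUnit (PowerSeries.map f B) := by
    rw [hmapB]; exact isUnit_prod_one_sub (n + 1)
  have hinv : PowerSeries.map f (Ring.inverse B) = Ring.inverse (PowerSeries.map f B) := by
    symm
    apply ring_inverse_eq_of_mul_eq_one
    rw [← map_mul, Ring.mul_inverse_cancel _ hBunit, map_one]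
  have hmapA : PowerSeries.map f
      (∏ j ∈ Finset.range n, (1 + (PowerSeries.X : ℤ⟦X⟧) ^ (2 * j + 1)))
      = ∏ j ∈ Finset.range n, ((1 : (ZMod 2)⟦X⟧) - X ^ (2 * j + 1)) := by
    rw [map_prod]
    refine Finset.prod_congr rfl fun j _ => ?_
    rw [map_add, map_one, map_pow, PowerSeries.map_X, h2]
  rw [vTerm, map_mul, map_mul, hinv, hmapA, hmapB, map_pow, PowerSeries.map_X]
  rw [Finset.prod_range_succ, Ring.mul_inverse_rev]
  rw [← ring_inverse_one_sub_X_pow (2 * n + 1) (by omega)]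
  have hP : IsUnit (∏ j ∈ Finset.range n, ((1 : (ZMod 2)⟦X⟧) - X ^ (2 * j + 1))) :=
    isUnit_prod_one_sub n
  calc X ^ ((n + 1) ^ 2) * (∏ j ∈ Finset.range n, ((1 : (ZMod 2)⟦X⟧) - X ^ (2 * j + 1)))
        * (Ring.inverse ((1 : (ZMod 2)⟦X⟧) - X ^ (2 * n + 1))
            * Ring.inverse (∏ j ∈ Finset.range n, ((1 : (ZMod 2)⟦X⟧) - X ^ (2 * j + 1))))
      = X ^ ((n + 1) ^ 2) * Ring.inverse ((1 : (ZMod 2)⟦X⟧) - X ^ (2 * n + 1))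
        * ((∏ j ∈ Finset.range n, ((1 : (ZMod 2)⟦X⟧) - X ^ (2 * j + 1)))
            * Ring.inverse (∏ j ∈ Finset.range n, ((1 : (ZMod 2)⟦X⟧) - X ^ (2 * j + 1)))) := by
        ring
    _ = X ^ ((n + 1) ^ 2) * Ring.inverse ((1 : (ZMod 2)⟦X⟧) - X ^ (2 * n + 1)) := by
        rw [Ring.mul_inverse_cancel _ hP, mul_one]

lemma Pv_mod_two (N : ℕ) :
    (Pv N : ZMod 2)
      = ((Finset.range (N + 1)).filter
          (fun n => (n + 1) ^ 2 ≤ N ∧ (2 * n + 1) ∣ (N - (n + 1) ^ 2))).card := by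
  classical
  have : (Pv N : ZMod 2)
      = PowerSeries.coeff N
          (PowerSeries.map (Int.castRingHom (ZMod 2)) (∑ n ∈ Finset.range (N + 1), vTerm n)) := by
    rw [PowerSeries.coeff_map]
    rfl
  rw [this, map_sum]
  have hterm : ∀ n, PowerSeries.coeff N
      (PowerSeries.map (Int.castRingHom (ZMod 2)) (vTerm n))
      = if (n + 1) ^ 2 ≤ N ∧ (2 * n + 1) ∣ (N - (n + 1) ^ 2) then 1 else 0 := by
    intro n
    rw [vTerm_map, coeff_X_pow_mul']
    by_cases h1 : (n + 1) ^ 2 ≤ N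
    · rw [if_pos h1]
      simp only [geom, coeff_mk]
      by_cases h2 : (2 * n + 1) ∣ (N - (n + 1) ^ 2)
      · rw [if_pos h2, if_pos ⟨h1, h2⟩]
      · rw [if_neg h2, if_neg (fun h => h2 h.2)]
    · rw [if_neg h1, if_neg (fun h => h1 h.1)]
  rw [map_sum]
  simp only [hterm]
  rw [Finset.sum_boole]

end Map

section Count

/-- For a nonsquare positive `m`, the divisors pair up `a ↔ m/a`, so the number of
divisors below `√m` is half the total number of divisors. -/
lemma card_divisors_eq_two_mul (m : ℕ) (hm : 0 < m) (hsq : ¬ IsSquare m) :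
    m.divisors.card = 2 * (m.divisors.filter (fun a => a ^ 2 < m)).card := by
  classical
  have key : (m.divisors.filter (fun a => a ^ 2 < m)).card
      = (m.divisors.filter (fun a => ¬ a ^ 2 < m)).card := by
    refine Finset.card_bij' (fun a _ => m / a) (fun b _ => m / b) ?_ ?_ ?_ ?_
    · intro a ha
      rw [Finset.mem_filter] at ha ⊢
      obtain ⟨haM, halt⟩ := ha
      rw [Nat.mem_divisors] at haM
      obtain ⟨hadvd, hm0⟩ := haM
      have ha0 : 0 < a := Nat.pos_of_dvd_of_pos hadvd hm
      have hab : a * (m / a) = m := Nat.mul_div_cancel' hadvd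
      refine ⟨Nat.mem_divisors.mpr ⟨Nat.div_dvd_of_dvd hadvd, hm0⟩, ?_⟩
      intro hlt
      -- a^2 < m and (m/a)^2 < m give m^2 < m^2
      have h1 : a ^ 2 * (m / a) ^ 2 = m ^ 2 := by
        rw [← mul_pow, hab]
      nlinarith [hm]
    · intro b hb
      rw [Finset.mem_filter] at hb ⊢
      obtain ⟨hbM, hble⟩ := hb
      rw [Nat.mem_divisors] at hbM
      obtain ⟨hbdvd, hm0⟩ := hbM
      have hb0 : 0 < b := Nat.pos_of_dvd_of_pos hbdvd hm
      have hab : b * (m / b) = m := Nat.mul_div_cancel' hbdvd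
      have ha0 : 0 < m / b := Nat.div_pos (Nat.le_of_dvd hm hbdvd) hb0
      refine ⟨Nat.mem_divisors.mpr ⟨Nat.div_dvd_of_dvd hbdvd, hm0⟩, ?_⟩
      -- (m/b)^2 < m since m ≤ b^2 and m is not a square
      have hmb2 : m ≤ b ^ 2 := Nat.not_lt.mp hble
      have hne : m ≠ b ^ 2 := by
        intro h
        exact hsq ⟨b, by rw [h]; ring⟩
      have hlt : m < b ^ 2 := lt_of_le_of_ne hmb2 hne
      -- m/b < b
      have hmb : m / b < b := by
        rw [Nat.div_lt_iff_lt_mul hb0]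
        nlinarith
      calc (m / b) ^ 2 = (m / b) * (m / b) := sq (m / b)
        _ < (m / b) * b := Nat.mul_lt_mul_of_pos_left hmb ha0
        _ = m := by rw [mul_comm]; exact hab
    · intro a ha
      rw [Finset.mem_filter, Nat.mem_divisors] at ha
      exact Nat.div_div_self ha.1.1 hm.ne'
    · intro b hb
      rw [Finset.mem_filter, Nat.mem_divisors] at hb
      exact Nat.div_div_self hb.1.1 hm.ne'
  have htot := Finset.card_filter_add_card_filter_not
    (s := m.divisors) (p := fun a => a ^ 2 < m)
  omega

end Count

/-- For `p ≥ 3` prime with `−2` a quadratic non-residue mod `p`, for all `α, n ≥ 0` and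
`1 ≤ j ≤ p−1`, `P_v(2·p^(2α+2)·n + 2·p^(2α+1)·j + (3·p^(2α+2)+1)/4) ≡ 0 (mod 2)`. -/
theorem Pv_congr_zero_mod_two (p : ℕ) (hp : p.Prime) (hp3 : 3 ≤ p)
    (hqnr : ¬ IsSquare (-2 : ZMod p)) (α n j : ℕ) (hj1 : 1 ≤ j) (hjp : j ≤ p - 1) :
    Pv (2 * p ^ (2 * α + 2) * n + 2 * p ^ (2 * α + 1) * j + (3 * p ^ (2 * α + 2) + 1) / 4) ≡
      0 [ZMOD 2] := by
  classical
  -- basic facts about p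
  have hp2 : p ≠ 2 := by omega
  have hpodd : Odd p := hp.odd_of_ne_two hp2
  have hp8 : p % 8 = 5 ∨ p % 8 = 7 := by
    haveI : Fact p.Prime := ⟨hp⟩
    have := (ZMod.exists_sq_eq_neg_two_iff (p := p) hp2).not.mp hqnr
    push_neg at this
    obtain ⟨k, hk⟩ := hpodd
    omega
  -- the square p^(2α+2) is ≡ 1 mod 8
  have hsq8 : p ^ (2 * α + 2) % 8 = 1 := by
    have hh : p ^ (2 * α + 2) = (p ^ (α + 1)) ^ 2 := by ring
    have hodd : Odd (p ^ (α + 1)) := hpodd.pow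
    obtain ⟨k, hk⟩ := hodd
    have hid : (2 * k + 1) ^ 2 = 4 * (k * (k + 1)) + 1 := by ring
    obtain ⟨m, hm⟩ := Nat.even_mul_succ_self k
    rw [hh, hk, hid]
    omega
  set N := 2 * p ^ (2 * α + 2) * n + 2 * p ^ (2 * α + 1) * j + (3 * p ^ (2 * α + 2) + 1) / 4
    with hNdef
  set t := 8 * p * n + 8 * j + 3 * p with htdef
  set M := p ^ (2 * α + 1) * t with hMdef
  have hMN : 4 * N = M + 1 := by
    have h4 : 4 ∣ 3 * p ^ (2 * α + 2) + 1 := by omega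
    obtain ⟨s, hs⟩ := h4
    have hs4 : (3 * p ^ (2 * α + 2) + 1) / 4 = s := by omega
    have hkey : p ^ (2 * α + 1) * (8 * p * n + 8 * j + 3 * p) + 1
        = 8 * p ^ (2 * α + 2) * n + 8 * p ^ (2 * α + 1) * j + (3 * p ^ (2 * α + 2) + 1) := by
      ring
    rw [hNdef, hs4, hMdef, htdef, hkey, hs]
    ring
  have hM0 : 0 < M := by omega
  have ht0 : 0 < t := by
    have hlin : t = 8 * (p * n) + 8 * j + 3 * p := by rw [htdef]; ring
    omega
  -- p does not divide t
  have hpt : ¬ p ∣ t := by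
    intro h
    have hlin : t = p * (8 * n + 3) + 8 * j := by rw [htdef]; ring
    rw [hlin] at h
    have h8j : p ∣ 8 * j := (Nat.dvd_add_right (dvd_mul_right p _)).mp h
    rcases (Nat.Prime.dvd_mul hp).mp h8j with h8 | hj
    · have := Nat.le_of_dvd (by norm_num) h8
      interval_cases p <;> omega
    · have := Nat.le_of_dvd (by omega) hj
      omega
  -- t is not a square (mod 8 obstruction)
  have htsq : ¬ IsSquare t := by
    rintro ⟨s, hs⟩
    have hlin : t = 8 * (p * n) + 8 * j + 3 * p := by rw [htdef]; ring
    have hsodd : Odd s := by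
      rcases Nat.even_or_odd s with he | ho
      · exfalso
        obtain ⟨k, hk⟩ := he
        have : s * s = 2 * (2 * (k * k)) := by rw [hk]; ring
        obtain ⟨l, hl⟩ := hpodd
        omega
      · exact ho
    obtain ⟨k, hk⟩ := hsodd
    have hs8 : s * s = 4 * (k * (k + 1)) + 1 := by rw [hk]; ring
    obtain ⟨m, hm⟩ := Nat.even_mul_succ_self k
    omega
  -- M is not a square (odd p-adic valuation)
  have hMsq : ¬ IsSquare M := by
    rintro ⟨s, hs⟩
    have hs0 : s ≠ 0 := by
      rintro rfl
      simp only [mul_zero] at hs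
      omega
    have hfac : M.factorization p = 2 * α + 1 := by
      rw [hMdef, Nat.factorization_mul (pow_ne_zero _ hp.pos.ne') ht0.ne',
        hp.factorization_pow]
      simp [Nat.factorization_eq_zero_of_not_dvd hpt]
    have hfac2 : M.factorization p = 2 * s.factorization p := by
      rw [hs, Nat.factorization_mul hs0 hs0]
      simp [two_mul]
    omega
  -- M is odd
  have hModd : Odd M := by
    rcases Nat.even_or_odd M with he | ho
    · exfalso; obtain ⟨k, hk⟩ := he; omega
    · exact ho
  have hodd_dvd : ∀ a : ℕ, a ∣ M → Odd a := by
    intro a ha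
    rcases Nat.even_or_odd a with he | ho
    · exfalso
      obtain ⟨c, hc⟩ := ha
      have : Even M := by rw [hc]; exact he.mul_right c
      exact (Nat.not_odd_iff_even.mpr this) hModd
    · exact ho
  -- reduce to parity of a cardinality
  have hmain : (Pv N : ZMod 2) = 0 := by
    rw [Pv_mod_two]
    set S := (Finset.range (N + 1)).filter
      (fun n => (n + 1) ^ 2 ≤ N ∧ (2 * n + 1) ∣ (N - (n + 1) ^ 2)) with hSdef
    set T := M.divisors.filter (fun a => a ^ 2 < M) with hTdef
    have hcardST : S.card = T.card := by
      refine Finset.card_bij' (fun n _ => 2 * n + 1) (fun a _ => a / 2) ?_ ?_ ?_ ?_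
      · -- forward direction
        intro m hm
        rw [hSdef, Finset.mem_filter] at hm
        obtain ⟨-, h1, h2⟩ := hm
        obtain ⟨k, hk⟩ := h2
        have hid : (2 * m + 1) * (2 * m + 3 + 4 * k) + 1
            = 4 * (m + 1) ^ 2 + 4 * ((2 * m + 1) * k) := by ring
        have hMeq : M = (2 * m + 1) * (2 * m + 3 + 4 * k) := by omega
        rw [hTdef, Finset.mem_filter, Nat.mem_divisors]
        refine ⟨⟨⟨2 * m + 3 + 4 * k, hMeq⟩, hM0.ne'⟩, ?_⟩
        rw [hMeq]
        nlinarith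
      · -- backward direction
        intro a ha
        rw [hTdef, Finset.mem_filter, Nat.mem_divisors] at ha
        obtain ⟨⟨hadvd, -⟩, halt⟩ := ha
        obtain ⟨b, hb⟩ := hadvd
        have ha0 : 0 < a := by
          rcases Nat.eq_zero_or_pos a with rfl | h
          · rw [zero_mul] at hb; omega
          · exact h
        have haodd : Odd a := hodd_dvd a ⟨b, hb⟩
        have hbodd : Odd b := hodd_dvd b ⟨a, by rw [hb]; ring⟩
        obtain ⟨m, hm⟩ := haodd
        have hm2 : a / 2 = m := by omega
        show a / 2 ∈ S
        rw [hm2]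
        -- a < b since a^2 < M = a * b
        have haltb : a < b := by
          have h1 : a * a < a * b := by
            have hsq : a ^ 2 = a * a := sq a
            rw [← hsq, ← hb]; exact halt
          exact Nat.lt_of_mul_lt_mul_left h1
        obtain ⟨l, hl⟩ := hbodd
        have hbge : b ≥ 2 * m + 3 := by omega
        -- (m+1)^2 ≤ N
        have hidA : 4 * (m + 1) ^ 2 = (2 * m + 1) * (2 * m + 3) + 1 := by ring
        have hidB : (2 * m + 1) * (2 * m + 3) ≤ (2 * m + 1) * b :=
          Nat.mul_le_mul_left _ hbge
        have hidC : (2 * m + 1) * b = M := by rw [← hm]; exact hb.symm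
        have h1 : (m + 1) ^ 2 ≤ N := by omega
        -- divisibility
        set c := b - (2 * m + 3) with hcdef
        have hbc : b = 2 * m + 3 + c := by omega
        have hidD : (2 * m + 1) * (2 * m + 3 + c) + 1
            = 4 * (m + 1) ^ 2 + (2 * m + 1) * c := by ring
        have hidE : (2 * m + 1) * b = (2 * m + 1) * (2 * m + 3 + c) := by rw [← hbc]
        have h4e : 4 * (N - (m + 1) ^ 2) = (2 * m + 1) * c := by omega
        have hdvd4 : (2 * m + 1) ∣ 4 * (N - (m + 1) ^ 2) := by
          rw [h4e]; exact ⟨c, rfl⟩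
        have hcop : Nat.Coprime (2 * m + 1) 4 := by
          have h2 : Nat.Coprime (2 * m + 1) 2 :=
            Odd.coprime_two_right ⟨m, by ring⟩
          have h4 : (4 : ℕ) = 2 ^ 2 := by norm_num
          rw [h4]
          exact Nat.Coprime.pow_right 2 h2
        have h2dvd : (2 * m + 1) ∣ (N - (m + 1) ^ 2) :=
          hcop.dvd_of_dvd_mul_left hdvd4
        rw [hSdef, Finset.mem_filter, Finset.mem_range]
        have hmle : m + 1 ≤ (m + 1) ^ 2 := Nat.le_self_pow (by norm_num) _
        exact ⟨by omega, h1, h2dvd⟩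
      · intro m hm
        show (2 * m + 1) / 2 = m
        omega
      · intro a ha
        show 2 * (a / 2) + 1 = a
        rw [hTdef, Finset.mem_filter, Nat.mem_divisors] at ha
        obtain ⟨⟨hadvd, -⟩, -⟩ := ha
        obtain ⟨k, hk⟩ := hodd_dvd a hadvd
        omega
    rw [hcardST]
    -- T.card is even
    have hdM : M.divisors.card = 2 * T.card := card_divisors_eq_two_mul M hM0 hMsq
    have hdt : t.divisors.card
        = 2 * (t.divisors.filter (fun a => a ^ 2 < t)).card :=
      card_divisors_eq_two_mul t ht0 htsq
    have hcop : Nat.Coprime (p ^ (2 * α + 1)) t :=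
      Nat.Coprime.pow_left _ ((Nat.Prime.coprime_iff_not_dvd hp).mpr hpt)
    have hdmul : M.divisors.card = (p ^ (2 * α + 1)).divisors.card * t.divisors.card :=
      hcop.card_divisors_mul
    have hdpk : (p ^ (2 * α + 1)).divisors.card = 2 * α + 2 := by
      rw [Nat.divisors_prime_pow hp, Finset.card_map, Finset.card_range]
    obtain ⟨u, hu⟩ : Even T.card := by
      have hT2 : 2 * T.card = (2 * α + 2) *
          (2 * (t.divisors.filter (fun a => a ^ 2 < t)).card) := by
        rw [← hdM, hdmul, hdpk, hdt]
      have hkey : (2 * α + 2) * (2 * (t.divisors.filter (fun a => a ^ 2 < t)).card)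
          = 2 * (2 * ((α + 1) * (t.divisors.filter (fun a => a ^ 2 < t)).card)) := by
        ring
      refine ⟨(α + 1) * (t.divisors.filter (fun a => a ^ 2 < t)).card, by omega⟩
    rw [hu]
    push_cast
    have h20 : (2 : ZMod 2) = 0 := by decide
    have : ((u : ZMod 2) + u) = 2 * u := by ring
    rw [this, h20, zero_mul]
  -- conclude
  have hdvd : ((2 : ℕ) : ℤ) ∣ Pv N :=
    (ZMod.intCast_zmod_eq_zero_iff_dvd (Pv N) 2).mp hmain
  exact Int.modEq_zero_iff_dvd.mpr (by exact_mod_cast hdvd)
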